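/- Let Ψ : [0,∞)² → [0,∞) satisfy (Ψ1)–(Ψ4) and let Φ be the loading–unloading density built from Ψ. Then for every fixed z₁,z₂ > 0 the map y ↦ Φ(y,z) is continuously differentiable on (0,∞)², and its partial derivatives are given piecewise by: ∂_{y₁}Φ(y,z) = ∂₁Ψ(y₁,y₂) on R₁(z); ∂₁Ψ(z₁,y₂)·(y₁/z₁) on R₂(z); ∂₁Ψ(y₁,z₂) − (z₂/2)∂₁₂Ψ(y₁,z₂)(1−(y₂/z₂)²) on R₃(z); (∂₁Ψ(z₁,z₂) − (z₂/2)∂₁₂Ψ(z₁,z₂)(1−(y₂/z₂)²))·(y₁/z₁) on R₄(z); and symmetrically ∂_{y₂}Φ(y,z) = ∂₂Ψ(y₁,y₂) on R₁(z); ∂₂Ψ(z₁,y₂) − (z₁/2)∂₁₂Ψ(z₁,y₂)(1−(y₁/z₁)²) on R₂(z); ∂₂Ψ(y₁,z₂)·(y₂/z₂) on R₃(z); (∂₂Ψ(z₁,z₂) − (z₁/2)∂₁₂Ψ(z₁,z₂)(1−(y₁/z₁)²))·(y₂/z₂) on R₄(z). -/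

import Mathlib

open MeasureTheory Set

/-- A loading density `Ψ : [0,∞)² → [0,∞)` together with its partial derivatives
`Ψ₁, Ψ₂, Ψ₁₁, Ψ₂₂, Ψ₁₂, Ψ₁₁₂, Ψ₁₂₂`, satisfying assumptions (Ψ1)–(Ψ4). -/
structure LoadingDensity where
  Ψ : ℝ → ℝ → ℝ
  Ψ₁ : ℝ → ℝ → ℝ
  Ψ₂ : ℝ → ℝ → ℝ
  Ψ₁₁ : ℝ → ℝ → ℝ
  Ψ₂₂ : ℝ → ℝ → ℝ
  Ψ₁₂ : ℝ → ℝ → ℝ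
  Ψ₁₁₂ : ℝ → ℝ → ℝ
  Ψ₁₂₂ : ℝ → ℝ → ℝ
  /-- `Ψ` is `[0,∞)`-valued on the quadrant. -/
  nonneg : ∀ y₁ y₂ : ℝ, 0 ≤ y₁ → 0 ≤ y₂ → 0 ≤ Ψ y₁ y₂
  /-- (Ψ1) -/
  zero : Ψ 0 0 = 0
  /-- (Ψ2): boundedness. -/
  bounded : ∃ M : ℝ, ∀ y₁ y₂ : ℝ, 0 ≤ y₁ → 0 ≤ y₂ → Ψ y₁ y₂ ≤ M
  /-- (Ψ2): Lipschitz continuity. -/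
  lipschitz : ∃ L : ℝ, ∀ y₁ y₂ y₁' y₂' : ℝ, 0 ≤ y₁ → 0 ≤ y₂ → 0 ≤ y₁' → 0 ≤ y₂' →
    |Ψ y₁ y₂ - Ψ y₁' y₂'| ≤ L * (|y₁ - y₁'| + |y₂ - y₂'|)
  /-- `Ψ₁` is the first partial derivative of `Ψ` on `(0,∞)²`. -/
  hasDeriv₁ : ∀ y₁ y₂ : ℝ, 0 < y₁ → 0 < y₂ → HasDerivAt (fun t => Ψ t y₂) (Ψ₁ y₁ y₂) y₁
  /-- `Ψ₂` is the second partial derivative of `Ψ` on `(0,∞)²`. -/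
  hasDeriv₂ : ∀ y₁ y₂ : ℝ, 0 < y₁ → 0 < y₂ → HasDerivAt (fun t => Ψ y₁ t) (Ψ₂ y₁ y₂) y₂
  /-- `Ψ₁₂` is the mixed second partial derivative on `(0,∞)²`. -/
  hasDeriv₁₂ : ∀ y₁ y₂ : ℝ, 0 < y₁ → 0 < y₂ → HasDerivAt (fun t => Ψ₁ y₁ t) (Ψ₁₂ y₁ y₂) y₂
  /-- (Ψ2): `∇Ψ` and `∂₁₂Ψ` are locally Lipschitz on `(0,∞)²`. -/
  gradLocLip : ∀ K : Set (ℝ × ℝ), IsCompact K → K ⊆ Ioi (0:ℝ) ×ˢ Ioi (0:ℝ) →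
    ∃ L : ℝ, ∀ p ∈ K, ∀ q ∈ K,
      |Ψ₁ p.1 p.2 - Ψ₁ q.1 q.2| ≤ L * ‖p - q‖ ∧
      |Ψ₂ p.1 p.2 - Ψ₂ q.1 q.2| ≤ L * ‖p - q‖ ∧
      |Ψ₁₂ p.1 p.2 - Ψ₁₂ q.1 q.2| ≤ L * ‖p - q‖
  /-- a.e. second derivative `Ψ₁₁`. -/
  hasDeriv₁₁ : ∀ᵐ p ∂(volume : Measure (ℝ × ℝ)), 0 < p.1 → 0 < p.2 →
    HasDerivAt (fun t => Ψ₁ t p.2) (Ψ₁₁ p.1 p.2) p.1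
  /-- a.e. second derivative `Ψ₂₂`. -/
  hasDeriv₂₂ : ∀ᵐ p ∂(volume : Measure (ℝ × ℝ)), 0 < p.1 → 0 < p.2 →
    HasDerivAt (fun t => Ψ₂ p.1 t) (Ψ₂₂ p.1 p.2) p.2
  /-- a.e. third derivative `Ψ₁₁₂`. -/
  hasDeriv₁₁₂ : ∀ᵐ p ∂(volume : Measure (ℝ × ℝ)), 0 < p.1 → 0 < p.2 →
    HasDerivAt (fun t => Ψ₁₂ t p.2) (Ψ₁₁₂ p.1 p.2) p.1
  /-- a.e. third derivative `Ψ₁₂₂`. -/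
  hasDeriv₁₂₂ : ∀ᵐ p ∂(volume : Measure (ℝ × ℝ)), 0 < p.1 → 0 < p.2 →
    HasDerivAt (fun t => Ψ₁₂ p.1 t) (Ψ₁₂₂ p.1 p.2) p.2
  /-- (Ψ3): `∂ᵢΨ ≥ max(yᵢ∂ᵢᵢΨ,0)` and `∂₁₂Ψ ≤ min(yᵢ∂ᵢᵢⱼΨ,0)` a.e. on `[0,∞)²`. -/
  psi3 : ∀ᵐ p ∂(volume : Measure (ℝ × ℝ)), 0 ≤ p.1 → 0 ≤ p.2 →
    max (p.1 * Ψ₁₁ p.1 p.2) 0 ≤ Ψ₁ p.1 p.2 ∧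
    max (p.2 * Ψ₂₂ p.1 p.2) 0 ≤ Ψ₂ p.1 p.2 ∧
    Ψ₁₂ p.1 p.2 ≤ min (p.1 * Ψ₁₁₂ p.1 p.2) 0 ∧
    Ψ₁₂ p.1 p.2 ≤ min (p.2 * Ψ₁₂₂ p.1 p.2) 0
  /-- (Ψ4). -/
  psi4 : ∃ M : ℝ, ∀ y₁ y₂ : ℝ, 0 < y₁ → 0 < y₂ → (y₁ + y₂) * |Ψ₁₂ y₁ y₂| ≤ M

/-- The loading–unloading density `Φ` built from a loading density `Ψ`. -/
noncomputable def Phi (L : LoadingDensity) (y₁ y₂ z₁ z₂ : ℝ) : ℝ :=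
  if z₁ ≤ y₁ then
    if z₂ ≤ y₂ then L.Ψ y₁ y₂
    else L.Ψ y₁ z₂ - z₂ / 2 * L.Ψ₂ y₁ z₂ * (1 - (y₂ / z₂) ^ 2)
  else
    if z₂ ≤ y₂ then L.Ψ z₁ y₂ - z₁ / 2 * L.Ψ₁ z₁ y₂ * (1 - (y₁ / z₁) ^ 2)
    else L.Ψ z₁ z₂ - z₁ / 2 * L.Ψ₁ z₁ z₂ * (1 - (y₁ / z₁) ^ 2)
      - z₂ / 2 * L.Ψ₂ z₁ z₂ * (1 - (y₂ / z₂) ^ 2)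
      + z₁ * z₂ / 4 * L.Ψ₁₂ z₁ z₂ * (1 - (y₁ / z₁) ^ 2) * (1 - (y₂ / z₂) ^ 2)

/-- The first component of the gradient in `y` of the loading–unloading density `Φ`
(the cohesive tension in direction 1 of the potential-based model). -/
noncomputable def PhiY1 (L : LoadingDensity) (y₁ y₂ z₁ z₂ : ℝ) : ℝ :=
  if z₁ ≤ y₁ then
    if z₂ ≤ y₂ then L.Ψ₁ y₁ y₂
    else L.Ψ₁ y₁ z₂ - z₂ / 2 * L.Ψ₁₂ y₁ z₂ * (1 - (y₂ / z₂) ^ 2)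
  else
    if z₂ ≤ y₂ then L.Ψ₁ z₁ y₂ * (y₁ / z₁)
    else (L.Ψ₁ z₁ z₂ - z₂ / 2 * L.Ψ₁₂ z₁ z₂ * (1 - (y₂ / z₂) ^ 2)) * (y₁ / z₁)

/-- The second component of the gradient in `y` of the loading–unloading density `Φ`. -/
noncomputable def PhiY2 (L : LoadingDensity) (y₁ y₂ z₁ z₂ : ℝ) : ℝ :=
  if z₂ ≤ y₂ then
    if z₁ ≤ y₁ then L.Ψ₂ y₁ y₂
    else L.Ψ₂ z₁ y₂ - z₁ / 2 * L.Ψ₁₂ z₁ y₂ * (1 - (y₁ / z₁) ^ 2)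
  else
    if z₁ ≤ y₁ then L.Ψ₂ y₁ z₂ * (y₂ / z₂)
    else (L.Ψ₂ z₁ z₂ - z₁ / 2 * L.Ψ₁₂ z₁ z₂ * (1 - (y₁ / z₁) ^ 2)) * (y₂ / z₂)


section Helpers

open Filter

lemma glueDeriv {g h : ℝ → ℝ} {c x D : ℝ}
    (hgc : c ≤ x → HasDerivAt g D x)
    (hhc : x ≤ c → HasDerivAt h D x)
    (heq : g c = h c) :
    HasDerivAt (fun t => if c ≤ t then g t else h t) D x := by
  rcases lt_trichotomy x c with hx | rfl | hx
  · apply (hhc hx.le).congr_of_eventuallyEq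
    filter_upwards [Iio_mem_nhds hx] with t ht
    rw [if_neg (not_le.2 ht)]
  · have h₁ : HasDerivWithinAt (fun t => if x ≤ t then g t else h t) D (Ici x) x :=
      ((hgc le_rfl).hasDerivWithinAt).congr (fun t ht => if_pos ht) (if_pos le_rfl)
    have h₂ : HasDerivWithinAt (fun t => if x ≤ t then g t else h t) D (Iic x) x := by
      refine ((hhc le_rfl).hasDerivWithinAt).congr (fun t ht => ?_)
        (by rw [if_pos le_rfl]; exact heq)
      rcases eq_or_lt_of_le (mem_Iic.mp ht) with rfl | hlt
      · rw [if_pos le_rfl]; exact heq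
      · rw [if_neg (not_le.2 hlt)]
    have := h₂.union h₁
    rw [Iic_union_Ici] at this
    exact this.hasDerivAt (by simp)
  · apply (hgc hx.le).congr_of_eventuallyEq
    filter_upwards [Ioi_mem_nhds hx] with t ht
    rw [if_pos ht.le]

lemma slope_mvt (f f' : ℝ → ℝ) {a t : ℝ} (h : a ≠ t)
    (hd : ∀ s ∈ Set.uIcc a t, HasDerivAt f (f' s) s) :
    ∃ c ∈ Set.uIcc a t, (f t - f a) / (t - a) = f' c := by
  rcases h.lt_or_gt with hlt | hlt
  · obtain ⟨c, hc, hce⟩ := exists_hasDerivAt_eq_slope f f' hlt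
      (fun s hs => (hd s (by rwa [uIcc_of_le hlt.le])).continuousAt.continuousWithinAt)
      (fun s hs => hd s (by rw [uIcc_of_le hlt.le]; exact Ioo_subset_Icc_self hs))
    exact ⟨c, by rw [uIcc_of_le hlt.le]; exact Ioo_subset_Icc_self hc, hce.symm⟩
  · obtain ⟨c, hc, hce⟩ := exists_hasDerivAt_eq_slope f f' hlt
      (fun s hs => (hd s (by rwa [uIcc_of_ge hlt.le])).continuousAt.continuousWithinAt)
      (fun s hs => hd s (by rw [uIcc_of_ge hlt.le]; exact Ioo_subset_Icc_self hs))
    refine ⟨c, by rw [uIcc_of_ge hlt.le]; exact Ioo_subset_Icc_self hc, ?_⟩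
    rw [hce, show f a - f t = -(f t - f a) by ring, show a - t = -(t - a) by ring,
      neg_div_neg_eq]

end Helpers

section LDHelpers

open Filter Topology

lemma LoadingDensity.contAt (L : LoadingDensity) {a b : ℝ} (ha : 0 < a) (hb : 0 < b) :
    ContinuousAt (fun p : ℝ × ℝ => L.Ψ₁ p.1 p.2) (a, b) ∧
    ContinuousAt (fun p : ℝ × ℝ => L.Ψ₂ p.1 p.2) (a, b) ∧
    ContinuousAt (fun p : ℝ × ℝ => L.Ψ₁₂ p.1 p.2) (a, b) := by
  set ε := min a b / 2 with hεdef
  have hε0 : 0 < ε := by positivity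
  have hεa : ε ≤ a / 2 := by
    rw [hεdef]; have := min_le_left a b; linarith
  have hεb : ε ≤ b / 2 := by
    rw [hεdef]; have := min_le_right a b; linarith
  have hsub : Metric.closedBall ((a, b) : ℝ × ℝ) ε ⊆ Ioi (0:ℝ) ×ˢ Ioi (0:ℝ) := by
    intro p hp
    rw [Metric.mem_closedBall, Prod.dist_eq] at hp
    have h1 : dist p.1 a ≤ ε := le_trans (le_max_left _ _) hp
    have h2 : dist p.2 b ≤ ε := le_trans (le_max_right _ _) hp
    rw [Real.dist_eq] at h1 h2
    have h1' := (abs_le.mp h1).1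
    have h2' := (abs_le.mp h2).1
    exact ⟨by simp only [mem_Ioi]; linarith, by simp only [mem_Ioi]; linarith⟩
  obtain ⟨C, hC⟩ := L.gradLocLip (Metric.closedBall ((a, b) : ℝ × ℝ) ε)
    (isCompact_closedBall _ _) hsub
  have key : ∀ f : ℝ × ℝ → ℝ,
      (∀ p ∈ Metric.closedBall ((a, b) : ℝ × ℝ) ε, ∀ q ∈ Metric.closedBall ((a, b) : ℝ × ℝ) ε,
        |f p - f q| ≤ C * ‖p - q‖) → ContinuousAt f (a, b) := by
    intro f hf
    rw [Metric.continuousAt_iff]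
    intro ε' hε'
    have hC'0 : (0:ℝ) < max C 0 + 1 := by positivity
    refine ⟨min ε (ε' / (max C 0 + 1)), by positivity, fun p hp => ?_⟩
    have hpK : p ∈ Metric.closedBall ((a, b) : ℝ × ℝ) ε :=
      Metric.mem_closedBall.mpr (le_of_lt (lt_of_lt_of_le hp (min_le_left _ _)))
    have hqK : ((a, b) : ℝ × ℝ) ∈ Metric.closedBall ((a, b) : ℝ × ℝ) ε :=
      Metric.mem_closedBall_self hε0.le
    rw [Real.dist_eq]
    calc |f p - f (a, b)| ≤ C * ‖p - (a, b)‖ := hf p hpK _ hqK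
      _ ≤ (max C 0 + 1) * ‖p - (a, b)‖ := by
          apply mul_le_mul_of_nonneg_right _ (norm_nonneg _)
          have := le_max_left C 0; linarith
      _ = (max C 0 + 1) * dist p (a, b) := by rw [dist_eq_norm]
      _ < (max C 0 + 1) * (ε' / (max C 0 + 1)) := by
          exact mul_lt_mul_of_pos_left (lt_of_lt_of_le hp (min_le_right _ _)) hC'0
      _ = ε' := mul_div_cancel₀ _ hC'0.ne'
  exact ⟨key _ (fun p hp q hq => (hC p hp q hq).1),
    key _ (fun p hp q hq => (hC p hp q hq).2.1),
    key _ (fun p hp q hq => (hC p hp q hq).2.2)⟩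

lemma LoadingDensity.clairaut (L : LoadingDensity) {a b : ℝ} (ha : 0 < a) (hb : 0 < b) :
    HasDerivAt (fun t => L.Ψ₂ t b) (L.Ψ₁₂ a b) a := by
  rw [hasDerivAt_iff_tendsto_slope, Metric.tendsto_nhds]
  intro ε hε
  obtain ⟨-, -, h12⟩ := L.contAt ha hb
  rw [Metric.continuousAt_iff] at h12
  obtain ⟨δ₀, hδ₀, hcont⟩ := h12 (ε / 2) (by positivity)
  set δ := min δ₀ (min a b) with hδdef
  have hδ : 0 < δ := by positivity
  have hδa : δ ≤ a := le_trans (min_le_right _ _) (min_le_left _ _)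
  have hδb : δ ≤ b := le_trans (min_le_right _ _) (min_le_right _ _)
  have hδ0 : δ ≤ δ₀ := min_le_left _ _
  have main : ∀ t : ℝ, t ≠ a → |t - a| < δ / 2 →
      dist (slope (fun s => L.Ψ₂ s b) a t) (L.Ψ₁₂ a b) ≤ ε / 2 := by
    intro t hta hlt
    have hlt1 := (abs_lt.mp hlt).1
    have hlt2 := (abs_lt.mp hlt).2
    have ht0 : 0 < t := by linarith
    rw [slope_def_field]
    -- Step 1: the double-difference quotient tends to the slope of Ψ₂
    have hmap : Tendsto (fun k : ℝ => b + k) (𝓝[≠] (0:ℝ)) (𝓝[≠] b) := by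
      rw [tendsto_nhdsWithin_iff]
      constructor
      · have h0 : Tendsto (fun k : ℝ => b + k) (𝓝 0) (𝓝 (b + 0)) :=
          (continuous_const.add continuous_id).tendsto 0
        simpa using h0.mono_left nhdsWithin_le_nhds
      · filter_upwards [self_mem_nhdsWithin] with k hk
        simp only [mem_compl_iff, mem_singleton_iff] at hk ⊢
        intro hcon; exact hk (by linarith)
    have hslope : ∀ s : ℝ, 0 < s →
        Tendsto (fun k => (L.Ψ s (b + k) - L.Ψ s b) / k) (𝓝[≠] (0:ℝ)) (𝓝 (L.Ψ₂ s b)) := by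
      intro s hs
      have := (hasDerivAt_iff_tendsto_slope.mp (L.hasDeriv₂ s b hs hb)).comp hmap
      refine this.congr (fun k => ?_)
      simp [Function.comp, slope_def_field]
    have hlim : Tendsto
        (fun k => ((L.Ψ t (b + k) - L.Ψ t b) / k - (L.Ψ a (b + k) - L.Ψ a b) / k) / (t - a))
        (𝓝[≠] (0:ℝ)) (𝓝 ((L.Ψ₂ t b - L.Ψ₂ a b) / (t - a))) :=
      ((hslope t ht0).sub (hslope a ha)).div_const _
    -- Step 2: a.e. bound via double mean value theorem
    have hbound : ∀ᶠ k in 𝓝[≠] (0:ℝ),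
        dist (((L.Ψ t (b + k) - L.Ψ t b) / k - (L.Ψ a (b + k) - L.Ψ a b) / k) / (t - a))
          (L.Ψ₁₂ a b) ≤ ε / 2 := by
      have hev : ∀ᶠ k in 𝓝[≠] (0:ℝ), |k| < δ / 2 := by
        apply Filter.Eventually.filter_mono nhdsWithin_le_nhds
        filter_upwards [Metric.ball_mem_nhds (0:ℝ) (show (0:ℝ) < δ / 2 by positivity)] with k hk
        rwa [Metric.mem_ball, Real.dist_eq, sub_zero] at hk
      filter_upwards [hev, self_mem_nhdsWithin] with k hkδ hk0
      have hkne : k ≠ 0 := hk0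
      have hk1 := (abs_lt.mp hkδ).1
      have hk2 := (abs_lt.mp hkδ).2
      have hbk : 0 < b + k := by linarith
      -- first MVT in the first variable
      have hφ : ∀ s ∈ Set.uIcc a t,
          HasDerivAt (fun s' => L.Ψ s' (b + k) - L.Ψ s' b) (L.Ψ₁ s (b + k) - L.Ψ₁ s b) s := by
        intro s hs
        have hs0 : 0 < s := by
          rcases mem_uIcc.mp hs with ⟨h1, _⟩ | ⟨h1, _⟩ <;> linarith
        exact (L.hasDeriv₁ s (b + k) hs0 hbk).sub (L.hasDeriv₁ s b hs0 hb)
      obtain ⟨ξ, hξ, hξeq⟩ := slope_mvt _ _ (Ne.symm hta) hφ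
      have hξ0 : 0 < ξ := by
        rcases mem_uIcc.mp hξ with ⟨h1, _⟩ | ⟨h1, _⟩ <;> linarith
      have hξa : |ξ - a| ≤ |t - a| := by
        rcases mem_uIcc.mp hξ with ⟨h1, h2⟩ | ⟨h1, h2⟩
        · rw [abs_of_nonneg (by linarith)]
          calc ξ - a ≤ t - a := by linarith
            _ ≤ |t - a| := le_abs_self _
        · rw [abs_of_nonpos (by linarith)]
          calc -(ξ - a) = a - ξ := by ring
            _ ≤ a - t := by linarith
            _ ≤ |t - a| := by rw [abs_sub_comm]; exact le_abs_self _
      -- second MVT in the second variable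
      have hψ : ∀ u ∈ Set.uIcc b (b + k),
          HasDerivAt (fun u' => L.Ψ₁ ξ u') (L.Ψ₁₂ ξ u) u := by
        intro u hu
        have hu0 : 0 < u := by
          rcases mem_uIcc.mp hu with ⟨h1, _⟩ | ⟨h1, _⟩ <;> linarith
        exact L.hasDeriv₁₂ ξ u hξ0 hu0
      have hbne : b ≠ b + k := by intro hcon; exact hkne (by linarith)
      obtain ⟨η, hη, hηeq⟩ := slope_mvt _ _ hbne hψ
      have hηb : |η - b| ≤ |k| := by
        rcases mem_uIcc.mp hη with ⟨h1, h2⟩ | ⟨h1, h2⟩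
        · rw [abs_of_nonneg (by linarith)]
          calc η - b ≤ k := by linarith
            _ ≤ |k| := le_abs_self _
        · rw [abs_of_nonpos (by linarith)]
          calc -(η - b) = b - η := by ring
            _ ≤ -k := by linarith
            _ ≤ |k| := neg_le_abs _
      -- identify the double quotient with Ψ₁₂ ξ η
      have hSk : ((L.Ψ t (b + k) - L.Ψ t b) / k - (L.Ψ a (b + k) - L.Ψ a b) / k) / (t - a)
          = L.Ψ₁₂ ξ η := by
        have e1 : ((L.Ψ t (b + k) - L.Ψ t b) / k - (L.Ψ a (b + k) - L.Ψ a b) / k) / (t - a)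
            = (((L.Ψ t (b + k) - L.Ψ t b) - (L.Ψ a (b + k) - L.Ψ a b)) / (t - a)) / (b + k - b) := by
          rw [show b + k - b = k by ring]; ring
        rw [e1]
        have hξeq' : ((L.Ψ t (b + k) - L.Ψ t b) - (L.Ψ a (b + k) - L.Ψ a b)) / (t - a)
            = L.Ψ₁ ξ (b + k) - L.Ψ₁ ξ b := hξeq
        rw [hξeq']
        exact hηeq
      rw [hSk]
      have hdist : dist ((ξ, η) : ℝ × ℝ) ((a, b) : ℝ × ℝ) < δ₀ := by
        rw [Prod.dist_eq]
        apply max_lt <;> rw [Real.dist_eq]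
        · linarith
        · linarith
      exact (hcont hdist).le
    exact le_of_tendsto (hlim.dist tendsto_const_nhds) hbound
  have hev1 : ∀ᶠ t in 𝓝[≠] a, |t - a| < δ / 2 := by
    apply Filter.Eventually.filter_mono nhdsWithin_le_nhds
    filter_upwards [Metric.ball_mem_nhds a (show (0:ℝ) < δ / 2 by positivity)] with t ht
    rwa [Metric.mem_ball, Real.dist_eq] at ht
  filter_upwards [hev1, self_mem_nhdsWithin] with t h1 h2
  exact lt_of_le_of_lt (main t h2 h1) (by linarith)

end LDHelpers

/-- for fixed `z₁,z₂ > 0` the map `y ↦ Φ(y,z)` is continuously differentiable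
on `(0,∞)²`, with partial derivatives given by the piecewise formulas `PhiY1`, `PhiY2`. -/
theorem statement4 (L : LoadingDensity) (z₁ z₂ : ℝ) (hz₁ : 0 < z₁) (hz₂ : 0 < z₂) :
    (∀ y₁ y₂ : ℝ, 0 < y₁ → 0 < y₂ →
      HasDerivAt (fun t => Phi L t y₂ z₁ z₂) (PhiY1 L y₁ y₂ z₁ z₂) y₁ ∧
      HasDerivAt (fun t => Phi L y₁ t z₁ z₂) (PhiY2 L y₁ y₂ z₁ z₂) y₂) ∧
    ContinuousOn (fun p : ℝ × ℝ => (PhiY1 L p.1 p.2 z₁ z₂, PhiY2 L p.1 p.2 z₁ z₂))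
      (Ioi (0:ℝ) ×ˢ Ioi (0:ℝ)) := by
  constructor
  · intro y₁ y₂ hy₁ hy₂
    constructor
    · -- derivative in y₁
      by_cases hy2 : z₂ ≤ y₂
      · have hfun : (fun t => Phi L t y₂ z₁ z₂) = fun t => if z₁ ≤ t then L.Ψ t y₂
            else L.Ψ z₁ y₂ - z₁ / 2 * L.Ψ₁ z₁ y₂ * (1 - (t / z₁) ^ 2) := by
          funext t; simp [Phi, hy2]
        rw [hfun]
        apply glueDeriv
        · intro h1
          have hval : PhiY1 L y₁ y₂ z₁ z₂ = L.Ψ₁ y₁ y₂ := by simp [PhiY1, h1, hy2]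
          rw [hval]; exact L.hasDeriv₁ y₁ y₂ hy₁ (lt_of_lt_of_le hz₂ hy2)
        · intro h1
          have hval : PhiY1 L y₁ y₂ z₁ z₂ = L.Ψ₁ z₁ y₂ * (y₁ / z₁) := by
            rcases eq_or_lt_of_le h1 with heq1 | hlt
            · rw [heq1]; simp [PhiY1, hy2, div_self hz₁.ne']
            · simp [PhiY1, not_le.2 hlt, hy2]
          rw [hval]
          have hq := (((hasDerivAt_id y₁).div_const z₁).pow 2).const_sub 1
          have total := (hq.const_mul (z₁ / 2 * L.Ψ₁ z₁ y₂)).const_sub (L.Ψ z₁ y₂)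
          refine total.congr_deriv ?_
          simp only [id]; norm_num; field_simp
        · rw [div_self hz₁.ne']; ring
      · have hfun : (fun t => Phi L t y₂ z₁ z₂) = fun t => if z₁ ≤ t then
            L.Ψ t z₂ - z₂ / 2 * L.Ψ₂ t z₂ * (1 - (y₂ / z₂) ^ 2)
            else L.Ψ z₁ z₂ - z₁ / 2 * L.Ψ₁ z₁ z₂ * (1 - (t / z₁) ^ 2)
              - z₂ / 2 * L.Ψ₂ z₁ z₂ * (1 - (y₂ / z₂) ^ 2)
              + z₁ * z₂ / 4 * L.Ψ₁₂ z₁ z₂ * (1 - (t / z₁) ^ 2) * (1 - (y₂ / z₂) ^ 2) := by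
          funext t; simp [Phi, hy2]
        rw [hfun]
        apply glueDeriv
        · intro h1
          have hval : PhiY1 L y₁ y₂ z₁ z₂
              = L.Ψ₁ y₁ z₂ - z₂ / 2 * L.Ψ₁₂ y₁ z₂ * (1 - (y₂ / z₂) ^ 2) := by
            simp [PhiY1, h1, hy2]
          rw [hval]
          exact (L.hasDeriv₁ y₁ z₂ hy₁ hz₂).sub
            (((L.clairaut hy₁ hz₂).const_mul (z₂ / 2)).mul_const _)
        · intro h1
          have hval : PhiY1 L y₁ y₂ z₁ z₂
              = (L.Ψ₁ z₁ z₂ - z₂ / 2 * L.Ψ₁₂ z₁ z₂ * (1 - (y₂ / z₂) ^ 2)) * (y₁ / z₁) := by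
            rcases eq_or_lt_of_le h1 with heq1 | hlt
            · rw [heq1]; simp [PhiY1, hy2, div_self hz₁.ne']
            · simp [PhiY1, not_le.2 hlt, hy2]
          rw [hval]
          have hq := (((hasDerivAt_id y₁).div_const z₁).pow 2).const_sub 1
          have h₂ := ((hq.const_mul (z₁ / 2 * L.Ψ₁ z₁ z₂)).const_sub (L.Ψ z₁ z₂)).sub_const
            (z₂ / 2 * L.Ψ₂ z₁ z₂ * (1 - (y₂ / z₂) ^ 2))
          have h₄ := (hq.const_mul (z₁ * z₂ / 4 * L.Ψ₁₂ z₁ z₂)).mul_const (1 - (y₂ / z₂) ^ 2)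
          have total := h₂.add h₄
          refine total.congr_deriv ?_
          simp only [id]; norm_num; field_simp; ring
        · rw [div_self hz₁.ne']; ring
    · -- derivative in y₂
      by_cases hy1 : z₁ ≤ y₁
      · have hfun : (fun t => Phi L y₁ t z₁ z₂) = fun t => if z₂ ≤ t then L.Ψ y₁ t
            else L.Ψ y₁ z₂ - z₂ / 2 * L.Ψ₂ y₁ z₂ * (1 - (t / z₂) ^ 2) := by
          funext t; simp [Phi, hy1]
        rw [hfun]
        apply glueDeriv
        · intro h2
          have hval : PhiY2 L y₁ y₂ z₁ z₂ = L.Ψ₂ y₁ y₂ := by simp [PhiY2, h2, hy1]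
          rw [hval]; exact L.hasDeriv₂ y₁ y₂ hy₁ hy₂
        · intro h2
          have hval : PhiY2 L y₁ y₂ z₁ z₂ = L.Ψ₂ y₁ z₂ * (y₂ / z₂) := by
            rcases eq_or_lt_of_le h2 with heq2 | hlt
            · rw [heq2]; simp [PhiY2, hy1, div_self hz₂.ne']
            · simp [PhiY2, not_le.2 hlt, hy1]
          rw [hval]
          have hq := (((hasDerivAt_id y₂).div_const z₂).pow 2).const_sub 1
          have total := (hq.const_mul (z₂ / 2 * L.Ψ₂ y₁ z₂)).const_sub (L.Ψ y₁ z₂)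
          refine total.congr_deriv ?_
          simp only [id]; norm_num; field_simp
        · rw [div_self hz₂.ne']; ring
      · have hfun : (fun t => Phi L y₁ t z₁ z₂) = fun t => if z₂ ≤ t then
            L.Ψ z₁ t - z₁ / 2 * L.Ψ₁ z₁ t * (1 - (y₁ / z₁) ^ 2)
            else L.Ψ z₁ z₂ - z₁ / 2 * L.Ψ₁ z₁ z₂ * (1 - (y₁ / z₁) ^ 2)
              - z₂ / 2 * L.Ψ₂ z₁ z₂ * (1 - (t / z₂) ^ 2)
              + z₁ * z₂ / 4 * L.Ψ₁₂ z₁ z₂ * (1 - (y₁ / z₁) ^ 2) * (1 - (t / z₂) ^ 2) := by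
          funext t; simp [Phi, hy1]
        rw [hfun]
        apply glueDeriv
        · intro h2
          have hval : PhiY2 L y₁ y₂ z₁ z₂
              = L.Ψ₂ z₁ y₂ - z₁ / 2 * L.Ψ₁₂ z₁ y₂ * (1 - (y₁ / z₁) ^ 2) := by
            simp [PhiY2, h2, hy1]
          rw [hval]
          exact (L.hasDeriv₂ z₁ y₂ hz₁ (lt_of_lt_of_le hz₂ h2)).sub
            (((L.hasDeriv₁₂ z₁ y₂ hz₁ (lt_of_lt_of_le hz₂ h2)).const_mul (z₁ / 2)).mul_const _)
        · intro h2
          have hval : PhiY2 L y₁ y₂ z₁ z₂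
              = (L.Ψ₂ z₁ z₂ - z₁ / 2 * L.Ψ₁₂ z₁ z₂ * (1 - (y₁ / z₁) ^ 2)) * (y₂ / z₂) := by
            rcases eq_or_lt_of_le h2 with heq2 | hlt
            · rw [heq2]; simp [PhiY2, hy1, div_self hz₂.ne']
            · simp [PhiY2, not_le.2 hlt, hy1]
          rw [hval]
          have hq := (((hasDerivAt_id y₂).div_const z₂).pow 2).const_sub 1
          have h₂ := (hq.const_mul (z₂ / 2 * L.Ψ₂ z₁ z₂)).const_sub
            (L.Ψ z₁ z₂ - z₁ / 2 * L.Ψ₁ z₁ z₂ * (1 - (y₁ / z₁) ^ 2))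
          have h₄ := (hq.const_mul (z₁ * z₂ / 4 * L.Ψ₁₂ z₁ z₂ * (1 - (y₁ / z₁) ^ 2)))
          have total := h₂.add h₄
          refine total.congr_deriv ?_
          simp only [id]; norm_num; field_simp; ring
        · rw [div_self hz₂.ne']; ring
  · -- continuity of the gradient
    have key1 : ∀ u v : ℝ, PhiY1 L u v z₁ z₂ =
        (L.Ψ₁ (max u z₁) (max v z₂) - z₂ / 2 * L.Ψ₁₂ (max u z₁) z₂
          * (1 - min (v / z₂) 1 ^ 2)) * min (u / z₁) 1 := by
      intro u v
      by_cases h1 : z₁ ≤ u <;> by_cases h2 : z₂ ≤ v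
      · rw [max_eq_left h1, max_eq_left h2, min_eq_right ((one_le_div hz₁).2 h1),
          min_eq_right ((one_le_div hz₂).2 h2)]
        simp [PhiY1, h1, h2]
      · rw [max_eq_left h1, max_eq_right (le_of_lt (not_le.1 h2)),
          min_eq_right ((one_le_div hz₁).2 h1),
          min_eq_left ((div_le_one hz₂).2 (le_of_lt (not_le.1 h2)))]
        simp [PhiY1, h1, h2]
      · rw [max_eq_right (le_of_lt (not_le.1 h1)), max_eq_left h2,
          min_eq_left ((div_le_one hz₁).2 (le_of_lt (not_le.1 h1))),
          min_eq_right ((one_le_div hz₂).2 h2)]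
        simp [PhiY1, h1, h2]
      · rw [max_eq_right (le_of_lt (not_le.1 h1)), max_eq_right (le_of_lt (not_le.1 h2)),
          min_eq_left ((div_le_one hz₁).2 (le_of_lt (not_le.1 h1))),
          min_eq_left ((div_le_one hz₂).2 (le_of_lt (not_le.1 h2)))]
        simp [PhiY1, h1, h2]
    have key2 : ∀ u v : ℝ, PhiY2 L u v z₁ z₂ =
        (L.Ψ₂ (max u z₁) (max v z₂) - z₁ / 2 * L.Ψ₁₂ z₁ (max v z₂)
          * (1 - min (u / z₁) 1 ^ 2)) * min (v / z₂) 1 := by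
      intro u v
      by_cases h1 : z₁ ≤ u <;> by_cases h2 : z₂ ≤ v
      · rw [max_eq_left h1, max_eq_left h2, min_eq_right ((one_le_div hz₁).2 h1),
          min_eq_right ((one_le_div hz₂).2 h2)]
        simp [PhiY2, h1, h2]
      · rw [max_eq_left h1, max_eq_right (le_of_lt (not_le.1 h2)),
          min_eq_right ((one_le_div hz₁).2 h1),
          min_eq_left ((div_le_one hz₂).2 (le_of_lt (not_le.1 h2)))]
        simp [PhiY2, h1, h2]
      · rw [max_eq_right (le_of_lt (not_le.1 h1)), max_eq_left h2,
          min_eq_left ((div_le_one hz₁).2 (le_of_lt (not_le.1 h1))),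
          min_eq_right ((one_le_div hz₂).2 h2)]
        simp [PhiY2, h1, h2]
      · rw [max_eq_right (le_of_lt (not_le.1 h1)), max_eq_right (le_of_lt (not_le.1 h2)),
          min_eq_left ((div_le_one hz₁).2 (le_of_lt (not_le.1 h1))),
          min_eq_left ((div_le_one hz₂).2 (le_of_lt (not_le.1 h2)))]
        simp [PhiY2, h1, h2]
    apply continuousOn_of_forall_continuousAt
    intro p _
    apply ContinuousAt.prodMk
    · simp only [key1]
      have hA : ContinuousAt (fun q : ℝ × ℝ => L.Ψ₁ (max q.1 z₁) (max q.2 z₂)) p := by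
        have hmax : ContinuousAt (fun q : ℝ × ℝ => ((max q.1 z₁, max q.2 z₂) : ℝ × ℝ)) p :=
          ((continuous_fst.max continuous_const).prodMk
            (continuous_snd.max continuous_const)).continuousAt
        exact ContinuousAt.comp (x := p) ((L.contAt (a := max p.1 z₁) (b := max p.2 z₂)
          (lt_of_lt_of_le hz₁ (le_max_right _ _))
          (lt_of_lt_of_le hz₂ (le_max_right _ _))).1) hmax
      have hB : ContinuousAt (fun q : ℝ × ℝ => L.Ψ₁₂ (max q.1 z₁) z₂) p := by
        have hmax : ContinuousAt (fun q : ℝ × ℝ => ((max q.1 z₁, z₂) : ℝ × ℝ)) p :=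
          ((continuous_fst.max continuous_const).prodMk continuous_const).continuousAt
        exact ContinuousAt.comp (x := p) ((L.contAt (a := max p.1 z₁) (b := z₂)
          (lt_of_lt_of_le hz₁ (le_max_right _ _)) hz₂).2.2) hmax
      have hC : ContinuousAt (fun q : ℝ × ℝ => 1 - min (q.2 / z₂) 1 ^ 2) p := by fun_prop
      have hD : ContinuousAt (fun q : ℝ × ℝ => min (q.1 / z₁) 1) p := by fun_prop
      exact (hA.sub ((continuousAt_const.mul hB).mul hC)).mul hD
    · simp only [key2]
      have hA : ContinuousAt (fun q : ℝ × ℝ => L.Ψ₂ (max q.1 z₁) (max q.2 z₂)) p := by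
        have hmax : ContinuousAt (fun q : ℝ × ℝ => ((max q.1 z₁, max q.2 z₂) : ℝ × ℝ)) p :=
          ((continuous_fst.max continuous_const).prodMk
            (continuous_snd.max continuous_const)).continuousAt
        exact ContinuousAt.comp (x := p) ((L.contAt (a := max p.1 z₁) (b := max p.2 z₂)
          (lt_of_lt_of_le hz₁ (le_max_right _ _))
          (lt_of_lt_of_le hz₂ (le_max_right _ _))).2.1) hmax
      have hB : ContinuousAt (fun q : ℝ × ℝ => L.Ψ₁₂ z₁ (max q.2 z₂)) p := by
        have hmax : ContinuousAt (fun q : ℝ × ℝ => ((z₁, max q.2 z₂) : ℝ × ℝ)) p :=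
          (continuous_const.prodMk (continuous_snd.max continuous_const)).continuousAt
        have hg := (L.contAt (a := z₁) (b := max p.2 z₂) hz₁
          (lt_of_lt_of_le hz₂ (le_max_right _ _))).2.2
        exact ContinuousAt.comp (g := fun r : ℝ × ℝ => L.Ψ₁₂ r.1 r.2)
          (f := fun q : ℝ × ℝ => ((z₁, max q.2 z₂) : ℝ × ℝ)) (x := p) hg hmax
      have hC : ContinuousAt (fun q : ℝ × ℝ => 1 - min (q.1 / z₁) 1 ^ 2) p := by fun_prop
      have hD : ContinuousAt (fun q : ℝ × ℝ => min (q.2 / z₂) 1) p := by fun_prop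
      exact (hA.sub ((continuousAt_const.mul hB).mul hC)).mul hD
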